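/- arXiv:1902.01760 — 2 statements merged into one kernel-verified Lean document; each statement's English description precedes it below -/
import Mathlib

section
/- Let I = [a,b] ⊂ (0,2) and h(α) := ∫_{ℝ^d \ {0}} (1 - cos(y₁)) |y|^{-d-α} dy for α ∈ I. Then h is finite on I, inf_{α∈I} h(α) > 0, and h is Lipschitz continuous on I: there is C₁ > 0 with |h(α) - h(α̃)| ≤ C₁|α - α̃| for all α, α̃ ∈ I. Consequently c(α) := 1/h(α) is also Lipschitz continuous on I. -/
open MeasureTheory

section Helpers
open Metric Set Filter

lemma two_rpow_abs_ge_one (p : ℝ) : (1:ℝ) ≤ 2 ^ |p| := by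
  rw [show (1:ℝ) = 2 ^ (0:ℝ) by simp]
  exact Real.rpow_le_rpow_of_exponent_le one_le_two (abs_nonneg p)

lemma annulus_bound {d : ℕ} {p : ℝ} (n : ℕ) (y : EuclideanSpace ℝ (Fin d))
    (h1 : (2:ℝ)^(-(n+1:ℝ)) ≤ ‖y‖) (h2 : ‖y‖ < (2:ℝ)^(-(n:ℝ))) :
    ‖y‖ ^ p ≤ (2:ℝ) ^ |p| * ((2:ℝ)^(-(n:ℝ)))^p := by
  have hb : (0:ℝ) < 2 ^ (-(n+1:ℝ)) := Real.rpow_pos_of_pos two_pos _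
  have hnn : (0:ℝ) ≤ ((2:ℝ)^(-(n:ℝ)))^p := Real.rpow_nonneg (Real.rpow_nonneg two_pos.le _) _
  rcases le_or_gt 0 p with hp | hp
  · calc ‖y‖ ^ p ≤ ((2:ℝ)^(-(n:ℝ)))^p :=
          Real.rpow_le_rpow (norm_nonneg _) h2.le hp
      _ ≤ (2:ℝ) ^ |p| * ((2:ℝ)^(-(n:ℝ)))^p := by
          nlinarith [two_rpow_abs_ge_one p]
  · calc ‖y‖ ^ p ≤ ((2:ℝ)^(-(n+1:ℝ)))^p :=
          Real.rpow_le_rpow_of_nonpos hb h1 hp.le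
      _ = (2:ℝ) ^ |p| * ((2:ℝ)^(-(n:ℝ)))^p := by
          rw [abs_of_neg hp, ← Real.rpow_mul two_pos.le, ← Real.rpow_mul two_pos.le,
            ← Real.rpow_add two_pos]
          ring_nf

lemma ballInt {d : ℕ} (hd : 0 < d) {p : ℝ} (hp : -(d:ℝ) < p) :
    IntegrableOn (fun y : EuclideanSpace ℝ (Fin d) => ‖y‖ ^ p) (ball 0 1) := by
  haveI : Nontrivial (EuclideanSpace ℝ (Fin d)) :=
    ⟨EuclideanSpace.single ⟨0, hd⟩ 1, 0, by
      intro h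
      have := congrArg (fun z => z ⟨0, hd⟩) h
      simp [EuclideanSpace.single_apply] at this⟩
  refine ⟨((by fun_prop : Measurable fun y : EuclideanSpace ℝ (Fin d) =>
    ‖y‖ ^ p)).aestronglyMeasurable.restrict, ?_⟩
  rw [hasFiniteIntegral_iff_ofReal (ae_of_all _ fun y => Real.rpow_nonneg (norm_nonneg _) _)]
  set E := EuclideanSpace ℝ (Fin d) with hE
  set A : ℕ → Set E := fun n =>
    {y : E | (2:ℝ)^(-(n+1:ℝ)) ≤ ‖y‖} ∩ ball 0 ((2:ℝ)^(-(n:ℝ))) with hA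
  have hsub : ball (0:E) 1 ⊆ {0} ∪ ⋃ n, A n := by
    intro y hy
    rcases eq_or_ne y 0 with rfl | hy0
    · exact Or.inl rfl
    · right
      have hy1 : ‖y‖ < 1 := by simpa using hy
      have hy2 : 0 < ‖y‖ := norm_pos_iff.2 hy0
      have hex : ∃ n : ℕ, (2:ℝ)^(-(n+1:ℝ)) ≤ ‖y‖ := by
        obtain ⟨n, hn⟩ := exists_pow_lt_of_lt_one hy2 (by norm_num : (1/2 : ℝ) < 1)
        have h1 : ((1:ℝ)/2)^n = (2:ℝ)^(-(n:ℝ)) := by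
          rw [← Real.rpow_natCast ((1:ℝ)/2) n, one_div, ← Real.rpow_neg_one (2:ℝ),
            ← Real.rpow_mul two_pos.le]
          norm_num
        have key : (2:ℝ)^(-(n+1:ℝ)) ≤ (2:ℝ)^(-(n:ℝ)) :=
          Real.rpow_le_rpow_of_exponent_le one_le_two (by linarith)
        exact ⟨n, key.trans (h1 ▸ hn.le)⟩
      set n₀ := Nat.find hex with hn₀
      refine mem_iUnion.2 ⟨n₀, Nat.find_spec hex, ?_⟩
      simp only [mem_ball, dist_zero_right]
      rcases Nat.eq_zero_or_pos n₀ with h0 | hpos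
      · rw [h0]
        simpa using hy1
      · obtain ⟨m, hm⟩ := Nat.exists_eq_succ_of_ne_zero hpos.ne'
        have := Nat.find_min hex (m := m) (by omega)
        push_neg at this
        rw [hm]
        convert this using 2
        push_cast
        exacts [rfl, by push_cast; ring]
  have hA_meas : ∀ n, MeasurableSet (A n) := fun n =>
    (measurableSet_le measurable_const measurable_norm).inter measurableSet_ball
  have hfr : Module.finrank ℝ E = d := finrank_euclideanSpace_fin
  have hvol : ∀ n : ℕ, volume (A n) ≤
      ENNReal.ofReal ((((2:ℝ)^(-(n:ℝ))))^d) * volume (ball (0:E) 1) := fun n => by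
    calc volume (A n) ≤ volume (ball (0:E) ((2:ℝ)^(-(n:ℝ)))) :=
          measure_mono inter_subset_right
      _ = ENNReal.ofReal ((((2:ℝ)^(-(n:ℝ))))^d) * volume (ball (0:E) 1) := by
          rw [Measure.addHaar_ball volume (0:E) (Real.rpow_nonneg two_pos.le _), hfr]
  have hAn : ∀ n : ℕ, ∫⁻ y in A n, ENNReal.ofReal (‖y‖^p) ≤
      (ENNReal.ofReal ((2:ℝ)^|p|) * volume (ball (0:E) 1)) *
        (ENNReal.ofReal ((2:ℝ)^(-(p + d)))) ^ n := fun n => by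
    have hb : ∀ y ∈ A n, ENNReal.ofReal (‖y‖^p) ≤
        ENNReal.ofReal ((2:ℝ)^|p| * (((2:ℝ)^(-(n:ℝ)))^p)) := fun y hy =>
      ENNReal.ofReal_le_ofReal (annulus_bound n y hy.1
        (by simpa [mem_ball, dist_zero_right] using hy.2))
    have hs0 : (0:ℝ) < (2:ℝ)^(-(n:ℝ)) := Real.rpow_pos_of_pos two_pos _
    have hreal : ((2:ℝ)^|p| * (((2:ℝ)^(-(n:ℝ)))^p)) * (((2:ℝ)^(-(n:ℝ)))^d) =
        (2:ℝ)^|p| * (((2:ℝ)^(-(p + (d:ℝ))))^(n:ℕ)) := by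
      rw [← Real.rpow_natCast ((2:ℝ)^(-(n:ℝ))) d, ← Real.rpow_natCast ((2:ℝ)^(-(p+(d:ℝ)))) n,
        mul_assoc, ← Real.rpow_add hs0, ← Real.rpow_mul two_pos.le, ← Real.rpow_mul two_pos.le]
      ring_nf
    calc ∫⁻ y in A n, ENNReal.ofReal (‖y‖^p)
        ≤ ∫⁻ _ in A n, ENNReal.ofReal ((2:ℝ)^|p| * (((2:ℝ)^(-(n:ℝ)))^p)) :=
          setLIntegral_mono' (hA_meas n) hb
      _ = ENNReal.ofReal ((2:ℝ)^|p| * (((2:ℝ)^(-(n:ℝ)))^p)) * volume (A n) :=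
          setLIntegral_const _ _
      _ ≤ ENNReal.ofReal ((2:ℝ)^|p| * (((2:ℝ)^(-(n:ℝ)))^p)) *
            (ENNReal.ofReal ((((2:ℝ)^(-(n:ℝ))))^d) * volume (ball (0:E) 1)) :=
          mul_le_mul' le_rfl (hvol n)
      _ = (ENNReal.ofReal ((2:ℝ)^|p|) * volume (ball (0:E) 1)) *
            (ENNReal.ofReal ((2:ℝ)^(-(p + d)))) ^ n := by
          rw [← mul_assoc, ← ENNReal.ofReal_mul (by positivity), hreal,
            ENNReal.ofReal_mul (by positivity),
            ENNReal.ofReal_pow (Real.rpow_nonneg two_pos.le _)]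
          ring
  have hr1 : ENNReal.ofReal ((2:ℝ)^(-(p + d))) < 1 := by
    rw [ENNReal.ofReal_lt_one]
    exact Real.rpow_lt_one_of_one_lt_of_neg one_lt_two (by linarith)
  have hgeo : ∑' n : ℕ, (ENNReal.ofReal ((2:ℝ)^(-(p + d)))) ^ n < ⊤ := by
    rw [ENNReal.tsum_geometric]
    exact ENNReal.inv_lt_top.2 (tsub_pos_of_lt hr1)
  calc ∫⁻ y in ball (0:E) 1, ENNReal.ofReal (‖y‖^p)
      ≤ ∫⁻ y in ({0} ∪ ⋃ n, A n : Set E), ENNReal.ofReal (‖y‖^p) :=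
        lintegral_mono_set hsub
    _ ≤ (∫⁻ y in ({0} : Set E), ENNReal.ofReal (‖y‖^p)) +
          ∫⁻ y in (⋃ n, A n : Set E), ENNReal.ofReal (‖y‖^p) :=
        lintegral_union_le _ _ _
    _ ≤ 0 + ∑' n : ℕ, ∫⁻ y in A n, ENNReal.ofReal (‖y‖^p) := by
        gcongr
        · rw [setLIntegral_measure_zero _ _ (measure_singleton (0:E))]
        · exact lintegral_iUnion_le _ _
    _ ≤ 0 + ∑' n : ℕ, (ENNReal.ofReal ((2:ℝ)^|p|) * volume (ball (0:E) 1)) *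
          (ENNReal.ofReal ((2:ℝ)^(-(p + d)))) ^ n := by
        gcongr
        exact hAn _
    _ = (ENNReal.ofReal ((2:ℝ)^|p|) * volume (ball (0:E) 1)) *
          ∑' n : ℕ, (ENNReal.ofReal ((2:ℝ)^(-(p + d)))) ^ n := by
        rw [zero_add, ENNReal.tsum_mul_left]
    _ < ⊤ := by
        apply ENNReal.mul_lt_top (ENNReal.mul_lt_top ENNReal.ofReal_lt_top
          measure_ball_lt_top) hgeo

lemma rpow_neg_le_aux {r s : ℝ} (hr : 1 ≤ r) (hs : 0 ≤ s) :
    r ^ (-s) ≤ 2 ^ s * (1 + r) ^ (-s) := by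
  have h0 : (0:ℝ) < r := lt_of_lt_of_le one_pos hr
  have h1 : (0:ℝ) < 1 + r := by linarith
  have hp1 : (0:ℝ) < (1+r)^s := Real.rpow_pos_of_pos h1 s
  have hp2 : (0:ℝ) < r^s := Real.rpow_pos_of_pos h0 s
  have key : ((1+r)/r) ^ s ≤ 2 ^ s :=
    Real.rpow_le_rpow (by positivity) (by rw [div_le_iff₀ h0]; linarith) hs
  calc r^(-s) = ((1+r)/r)^s * (1+r)^(-s) := by
        rw [Real.div_rpow h1.le h0.le, Real.rpow_neg h1.le, Real.rpow_neg h0.le]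
        field_simp
    _ ≤ 2^s * (1+r)^(-s) :=
        mul_le_mul_of_nonneg_right key (Real.rpow_nonneg h1.le _)

lemma masterInt {d : ℕ} (hd : 0 < d) {γ : ℝ} (h0 : 0 < γ) (h2 : γ < 2) :
    IntegrableOn (fun y : EuclideanSpace ℝ (Fin d) =>
      min 2 (‖y‖^2) * ‖y‖ ^ (-(d:ℝ) - γ)) ({0}ᶜ) := by
  have hmeas : Measurable (fun y : EuclideanSpace ℝ (Fin d) =>
      min 2 (‖y‖^2) * ‖y‖ ^ (-(d:ℝ) - γ)) := by fun_prop
  have hinner : IntegrableOn (fun y : EuclideanSpace ℝ (Fin d) =>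
      min 2 (‖y‖^2) * ‖y‖ ^ (-(d:ℝ) - γ)) (ball 0 1) := by
    refine Integrable.mono' (ballInt hd (show -(d:ℝ) < 2 - d - γ by linarith))
      hmeas.aestronglyMeasurable.restrict (ae_of_all _ fun y => ?_)
    rw [Real.norm_eq_abs, abs_of_nonneg (by positivity)]
    rcases eq_or_ne ‖y‖ 0 with hy | hy
    · rw [hy, Real.zero_rpow (by have hdp : (0:ℝ) < d := Nat.cast_pos.mpr hd; intro h; linarith),
        mul_zero]
      positivity
    · have hy0 : 0 < ‖y‖ := lt_of_le_of_ne (norm_nonneg _) (Ne.symm hy)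
      calc min 2 (‖y‖^2) * ‖y‖ ^ (-(d:ℝ) - γ) ≤ ‖y‖^2 * ‖y‖ ^ (-(d:ℝ) - γ) :=
            mul_le_mul_of_nonneg_right (min_le_right _ _)
              (Real.rpow_nonneg (norm_nonneg _) _)
        _ = ‖y‖ ^ (2 - (d:ℝ) - γ) := by
            rw [← Real.rpow_natCast ‖y‖ 2, ← Real.rpow_add hy0]
            norm_num
            ring_nf
  have houter : IntegrableOn (fun y : EuclideanSpace ℝ (Fin d) =>
      min 2 (‖y‖^2) * ‖y‖ ^ (-(d:ℝ) - γ)) ((ball 0 1)ᶜ) := by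
    have hint : Integrable (fun y : EuclideanSpace ℝ (Fin d) =>
        2 * 2^((d:ℝ)+γ) * (1 + ‖y‖) ^ (-((d:ℝ)+γ))) :=
      (integrable_one_add_norm (by rw [finrank_euclideanSpace_fin]; linarith)).const_mul _
    refine Integrable.mono' hint.restrict hmeas.aestronglyMeasurable.restrict ?_
    refine (ae_restrict_iff' measurableSet_ball.compl).2 (ae_of_all _ fun y hy => ?_)
    have hy1 : (1:ℝ) ≤ ‖y‖ := by simpa [mem_ball, dist_zero_right] using hy
    rw [Real.norm_eq_abs, abs_of_nonneg (by positivity)]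
    have := rpow_neg_le_aux hy1 (show (0:ℝ) ≤ (d:ℝ)+γ by positivity)
    calc min 2 (‖y‖^2) * ‖y‖ ^ (-(d:ℝ) - γ) ≤ 2 * ‖y‖ ^ (-((d:ℝ)+γ)) := by
          rw [show -(d:ℝ) - γ = -((d:ℝ)+γ) by ring]
          exact mul_le_mul_of_nonneg_right (min_le_left _ _)
            (Real.rpow_nonneg (norm_nonneg _) _)
      _ ≤ 2 * (2^((d:ℝ)+γ) * (1 + ‖y‖) ^ (-((d:ℝ)+γ))) := by
          exact mul_le_mul_of_nonneg_left this (by norm_num)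
      _ = 2 * 2^((d:ℝ)+γ) * (1 + ‖y‖) ^ (-((d:ℝ)+γ)) := by ring
  exact (hinner.union houter).mono_set (by rw [union_compl_self]; exact subset_univ _)

lemma abs_exp_sub_exp (u v : ℝ) :
    |Real.exp u - Real.exp v| ≤ |u - v| * (Real.exp u + Real.exp v) := by
  wlog h : v ≤ u with H
  · have := H v u (le_of_not_ge h)
    rwa [abs_sub_comm, abs_sub_comm v u, add_comm] at this
  rw [abs_of_nonneg (sub_nonneg.2 (Real.exp_le_exp.2 h)), abs_of_nonneg (sub_nonneg.2 h)]
  have hkey : Real.exp (v - u) * Real.exp u = Real.exp v := by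
    rw [← Real.exp_add]; ring_nf
  nlinarith [Real.add_one_le_exp (v - u), Real.exp_pos u, Real.exp_pos v]

lemma abs_log_le {r ε : ℝ} (hr : 0 < r) (hε : 0 < ε) :
    |Real.log r| ≤ (r^ε + r^(-ε))/ε := by
  have key : ∀ s : ℝ, 1 ≤ s → Real.log s ≤ s^ε/ε := by
    intro s hs
    have hs0 : (0:ℝ) < s := lt_of_lt_of_le one_pos hs
    have h1 : Real.log (s^ε) = ε * Real.log s := Real.log_rpow hs0 ε
    have h2 : Real.log (s^ε) ≤ s^ε - 1 := Real.log_le_sub_one_of_pos (Real.rpow_pos_of_pos hs0 ε)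
    rw [le_div_iff₀ hε]
    nlinarith [Real.rpow_pos_of_pos hs0 ε]
  rcases le_or_gt 1 r with h | h
  · rw [abs_of_nonneg (Real.log_nonneg h)]
    refine (key r h).trans ?_
    have h2 : (0:ℝ) ≤ r^(-ε) := Real.rpow_nonneg hr.le _
    gcongr
    linarith
  · rw [abs_of_neg (Real.log_neg hr h), ← Real.log_inv]
    have h1 : 1 ≤ r⁻¹ := (one_le_inv_iff₀).2 ⟨hr, h.le⟩
    refine (key _ h1).trans ?_
    have h3 : (r⁻¹)^ε = r^(-ε) := by
      rw [Real.inv_rpow hr.le, ← Real.rpow_neg hr.le]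
    rw [h3]
    have h2 : (0:ℝ) ≤ r^ε := Real.rpow_nonneg hr.le _
    gcongr
    linarith

lemma rpow_diff {r D a b ε α α' : ℝ} (hr : 0 < r) (hε : 0 < ε)
    (hαa : a ≤ α) (hαb : α ≤ b) (hα'a : a ≤ α') (hα'b : α' ≤ b) :
    |r ^ (-D - α) - r ^ (-D - α')| ≤
      |α - α'| * (2/ε) *
        ((r^(-D-(a-ε)) + r^(-D-(a+ε))) + (r^(-D-(b-ε)) + r^(-D-(b+ε)))) := by
  have hL : ∀ s : ℝ, r ^ s = Real.exp (Real.log r * s) := fun s => Real.rpow_def_of_pos hr s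
  have hmono : ∀ β, a ≤ β → β ≤ b → r ^ (-D-β) ≤ r^(-D-a) + r^(-D-b) := by
    intro β h1 h2
    rcases le_or_gt 1 r with h | h
    · have : r^(-D-β) ≤ r^(-D-a) := Real.rpow_le_rpow_of_exponent_le h (by linarith)
      linarith [Real.rpow_nonneg hr.le (-D-b)]
    · have : r^(-D-β) ≤ r^(-D-b) := Real.rpow_le_rpow_of_exponent_ge hr h.le (by linarith)
      linarith [Real.rpow_nonneg hr.le (-D-a)]
  have hlog := abs_log_le hr hε
  have step1 : |r ^ (-D - α) - r ^ (-D - α')| ≤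
      |Real.log r| * |α - α'| * (r ^ (-D - α) + r ^ (-D - α')) := by
    rw [hL (-D-α), hL (-D-α')]
    refine (abs_exp_sub_exp _ _).trans (le_of_eq ?_)
    rw [← hL, ← hL, ← mul_sub, abs_mul,
      show -D - α - (-D - α') = -(α - α') by ring, abs_neg]
  have step2 : r ^ (-D - α) + r ^ (-D - α') ≤ 2 * (r^(-D-a) + r^(-D-b)) := by
    have h1 := hmono α hαa hαb
    have h2 := hmono α' hα'a hα'b
    linarith
  have hprod : (r^ε + r^(-ε)) * (r^(-D-a) + r^(-D-b)) =
      (r^(-D-(a-ε)) + r^(-D-(a+ε))) + (r^(-D-(b-ε)) + r^(-D-(b+ε))) := by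
    rw [show -D-(a-ε) = ε + (-D-a) by ring, Real.rpow_add hr,
      show -D-(a+ε) = -ε + (-D-a) by ring, Real.rpow_add hr,
      show -D-(b-ε) = ε + (-D-b) by ring, Real.rpow_add hr,
      show -D-(b+ε) = -ε + (-D-b) by ring, Real.rpow_add hr]
    ring
  refine step1.trans ?_
  have hnn : (0:ℝ) ≤ r^(-D-a) + r^(-D-b) := by positivity
  calc |Real.log r| * |α - α'| * (r ^ (-D - α) + r ^ (-D - α'))
      ≤ ((r^ε + r^(-ε))/ε) * |α - α'| * (2 * (r^(-D-a) + r^(-D-b))) := by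
        apply mul_le_mul (mul_le_mul_of_nonneg_right hlog (abs_nonneg _)) step2
        · positivity
        · positivity
    _ = |α - α'| * (2/ε) * ((r^ε + r^(-ε)) * (r^(-D-a) + r^(-D-b))) := by
        field_simp
    _ = _ := by rw [hprod]

lemma coord_sq_le {d : ℕ} (y : EuclideanSpace ℝ (Fin d)) (i : Fin d) :
    (y i)^2 ≤ ‖y‖^2 := by
  have h : ‖y‖^2 = ∑ j, ‖y j‖^2 := by
    rw [EuclideanSpace.norm_eq, Real.sq_sqrt (Finset.sum_nonneg fun j _ => sq_nonneg _)]
  rw [h]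
  have := Finset.single_le_sum (f := fun j => ‖y j‖^2)
    (fun j _ => sq_nonneg _) (Finset.mem_univ i)
  simpa [Real.norm_eq_abs, sq_abs] using this

lemma one_sub_cos_le_min {d : ℕ} (hd : 0 < d) (y : EuclideanSpace ℝ (Fin d)) :
    1 - Real.cos (y ⟨0, hd⟩) ≤ min 2 (‖y‖^2) := by
  refine le_min (by nlinarith [Real.neg_one_le_cos (y ⟨0, hd⟩)]) ?_
  have h1 : 1 - Real.cos (y ⟨0, hd⟩) ≤ (y ⟨0, hd⟩)^2 := by
    nlinarith [Real.one_sub_sq_div_two_le_cos (x := y ⟨0, hd⟩), sq_nonneg (y ⟨0, hd⟩)]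
  exact h1.trans (coord_sq_le y _)

lemma one_sub_cos_nonneg (t : ℝ) : 0 ≤ 1 - Real.cos t := by
  nlinarith [Real.cos_le_one t]

lemma fα_meas {d : ℕ} (hd : 0 < d) (α : ℝ) :
    Measurable (fun y : EuclideanSpace ℝ (Fin d) =>
      (1 - Real.cos (y ⟨0, hd⟩)) * ‖y‖ ^ (-(d:ℝ) - α)) := by
  have h1 : Measurable (fun y : EuclideanSpace ℝ (Fin d) => y ⟨0, hd⟩) := by
    exact (EuclideanSpace.proj (⟨0, hd⟩ : Fin d)).continuous.measurable
  fun_prop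

lemma fα_int {d : ℕ} (hd : 0 < d) {α : ℝ} (h0 : 0 < α) (h2 : α < 2) :
    IntegrableOn (fun y : EuclideanSpace ℝ (Fin d) =>
      (1 - Real.cos (y ⟨0, hd⟩)) * ‖y‖ ^ (-(d:ℝ) - α)) ({0}ᶜ) := by
  refine Integrable.mono' (masterInt hd h0 h2)
    (fα_meas hd α).aestronglyMeasurable.restrict (ae_of_all _ fun y => ?_)
  rw [Real.norm_eq_abs, abs_of_nonneg
    (mul_nonneg (one_sub_cos_nonneg _) (Real.rpow_nonneg (norm_nonneg _) _))]
  exact mul_le_mul_of_nonneg_right (one_sub_cos_le_min hd y)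
    (Real.rpow_nonneg (norm_nonneg _) _)

end Helpers

noncomputable def stableH (d : ℕ) (hd : 0 < d) (α : ℝ) : ℝ :=
  ∫ y in ({0}ᶜ : Set (EuclideanSpace ℝ (Fin d))),
    (1 - Real.cos (y ⟨0, hd⟩)) * ‖y‖ ^ (-(d : ℝ) - α)

theorem stmt_7 (d : ℕ) (hd : 0 < d) (a b : ℝ)
    (ha : 0 < a) (hab : a ≤ b) (hb : b < 2) :
    (∀ α ∈ Set.Icc a b,
      IntegrableOn
        (fun y : EuclideanSpace ℝ (Fin d) =>
          (1 - Real.cos (y ⟨0, hd⟩)) * ‖y‖ ^ (-(d : ℝ) - α))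
        ({0}ᶜ)) ∧
    (∃ m > (0:ℝ), ∀ α ∈ Set.Icc a b, m ≤ stableH d hd α) ∧
    (∃ C₁ > (0:ℝ), ∀ α ∈ Set.Icc a b, ∀ α' ∈ Set.Icc a b,
      |stableH d hd α - stableH d hd α'| ≤ C₁ * |α - α'|) ∧
    (∃ C₂ > (0:ℝ), ∀ α ∈ Set.Icc a b, ∀ α' ∈ Set.Icc a b,
      |(stableH d hd α)⁻¹ - (stableH d hd α')⁻¹| ≤ C₂ * |α - α'|) := by
  have hd0 : (0:ℝ) < d := Nat.cast_pos.mpr hd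
  have hint : ∀ α ∈ Set.Icc a b,
      IntegrableOn (fun y : EuclideanSpace ℝ (Fin d) =>
        (1 - Real.cos (y ⟨0, hd⟩)) * ‖y‖ ^ (-(d : ℝ) - α)) ({0}ᶜ) := fun α hα =>
    fα_int hd (lt_of_lt_of_le ha hα.1) (lt_of_le_of_lt hα.2 hb)
  have hms : MeasurableSet ({0}ᶜ : Set (EuclideanSpace ℝ (Fin d))) :=
    (measurableSet_singleton 0).compl
  -- lower bound function
  set g : EuclideanSpace ℝ (Fin d) → ℝ := fun y =>
    (1 - Real.cos (y ⟨0, hd⟩)) * min (‖y‖^(-(d:ℝ)-a)) (‖y‖^(-(d:ℝ)-b)) with hg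
  have hg_nonneg : ∀ y, 0 ≤ g y := fun y =>
    mul_nonneg (one_sub_cos_nonneg _)
      (le_min (Real.rpow_nonneg (norm_nonneg _) _) (Real.rpow_nonneg (norm_nonneg _) _))
  have hg_meas : Measurable g := by
    have h1 : Measurable (fun y : EuclideanSpace ℝ (Fin d) => y ⟨0, hd⟩) :=
      (EuclideanSpace.proj (⟨0, hd⟩ : Fin d)).continuous.measurable
    fun_prop
  have hg_le : ∀ α ∈ Set.Icc a b, ∀ y : EuclideanSpace ℝ (Fin d), y ≠ 0 →
      g y ≤ (1 - Real.cos (y ⟨0, hd⟩)) * ‖y‖ ^ (-(d : ℝ) - α) := by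
    intro α hα y hy
    have hr : 0 < ‖y‖ := norm_pos_iff.2 hy
    refine mul_le_mul_of_nonneg_left ?_ (one_sub_cos_nonneg _)
    rcases le_or_gt 1 ‖y‖ with h | h
    · exact (min_le_right _ _).trans
        (Real.rpow_le_rpow_of_exponent_le h (by linarith [hα.2]))
    · exact (min_le_left _ _).trans
        (Real.rpow_le_rpow_of_exponent_ge hr h.le (by linarith [hα.1]))
  have hg_int : IntegrableOn g ({0}ᶜ) := by
    refine Integrable.mono' (hint a ⟨le_refl a, hab⟩)
      hg_meas.aestronglyMeasurable.restrict (ae_of_all _ fun y => ?_)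
    rw [Real.norm_eq_abs, abs_of_nonneg (hg_nonneg y)]
    exact mul_le_mul_of_nonneg_left (min_le_left _ _) (one_sub_cos_nonneg _)
  set m := ∫ y in ({0}ᶜ : Set (EuclideanSpace ℝ (Fin d))), g y with hmdef
  have hm : 0 < m := by
    rw [hmdef, setIntegral_pos_iff_support_of_nonneg_ae
      (ae_of_all _ fun y => hg_nonneg y) hg_int]
    set U : Set (EuclideanSpace ℝ (Fin d)) :=
      (fun y : EuclideanSpace ℝ (Fin d) => y ⟨0, hd⟩) ⁻¹' (Set.Ioo 1 2) with hU
    have hUopen : IsOpen U :=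
      isOpen_Ioo.preimage (EuclideanSpace.proj (⟨0, hd⟩ : Fin d)).continuous
    have hUne : U.Nonempty := by
      refine ⟨EuclideanSpace.single ⟨0, hd⟩ (3/2 : ℝ), ?_⟩
      simp only [hU, Set.mem_preimage, EuclideanSpace.single_apply, if_pos rfl]
      constructor <;> norm_num
    have hUsub : U ⊆ Function.support g ∩ {0}ᶜ := by
      intro y hy
      obtain ⟨h1, h2⟩ := hy
      have hy0 : y ≠ 0 := by
        intro h
        rw [h] at h1
        simp at h1
        linarith
      have hr : 0 < ‖y‖ := norm_pos_iff.2 hy0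
      refine ⟨?_, hy0⟩
      have hcos : Real.cos (y ⟨0, hd⟩) < 1 := by
        refine lt_of_le_of_ne (Real.cos_le_one _) ?_
        intro h
        have h2pi : (2:ℝ) < 2 * Real.pi := by nlinarith [Real.pi_gt_three]
        rw [Real.cos_eq_one_iff_of_lt_of_lt (by linarith) (by linarith)] at h
        linarith
      have : 0 < g y := mul_pos (by linarith)
        (lt_min (Real.rpow_pos_of_pos hr _) (Real.rpow_pos_of_pos hr _))
      exact ne_of_gt this
    exact lt_of_lt_of_le (hUopen.measure_pos volume hUne) (measure_mono hUsub)
  have hmle : ∀ α ∈ Set.Icc a b, m ≤ stableH d hd α := by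
    intro α hα
    rw [hmdef]
    exact setIntegral_mono_on hg_int (hint α hα) hms fun y hy => hg_le α hα y hy
  -- Lipschitz
  set ε : ℝ := min (a/2) ((2-b)/2) with hεdef
  have hε : 0 < ε := lt_min (by linarith) (by linarith)
  have hε1 : ε ≤ a/2 := min_le_left _ _
  have hε2 : ε ≤ (2-b)/2 := min_le_right _ _
  have exp1 : 0 < a - ε ∧ a - ε < 2 := ⟨by linarith, by linarith⟩
  have exp2 : 0 < a + ε ∧ a + ε < 2 := ⟨by linarith, by linarith⟩
  have exp3 : 0 < b - ε ∧ b - ε < 2 := ⟨by linarith, by linarith⟩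
  have exp4 : 0 < b + ε ∧ b + ε < 2 := ⟨by linarith, by linarith⟩
  set G : EuclideanSpace ℝ (Fin d) → ℝ := fun y =>
    (2/ε) * (min 2 (‖y‖^2) * ‖y‖^(-(d:ℝ)-(a-ε)) + min 2 (‖y‖^2) * ‖y‖^(-(d:ℝ)-(a+ε)) +
      min 2 (‖y‖^2) * ‖y‖^(-(d:ℝ)-(b-ε)) + min 2 (‖y‖^2) * ‖y‖^(-(d:ℝ)-(b+ε))) with hGdef
  have hGint : IntegrableOn G ({0}ᶜ) := by
    exact ((((masterInt hd exp1.1 exp1.2).add (masterInt hd exp2.1 exp2.2)).add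
      (masterInt hd exp3.1 exp3.2)).add (masterInt hd exp4.1 exp4.2)).const_mul (2/ε)
  have hG_nonneg : ∀ y, 0 ≤ G y := by
    intro y
    have hmin : (0:ℝ) ≤ min 2 (‖y‖^2) := le_min (by norm_num) (sq_nonneg _)
    have r1 := Real.rpow_nonneg (norm_nonneg y) (-(d:ℝ)-(a-ε))
    have r2 := Real.rpow_nonneg (norm_nonneg y) (-(d:ℝ)-(a+ε))
    have r3 := Real.rpow_nonneg (norm_nonneg y) (-(d:ℝ)-(b-ε))
    have r4 := Real.rpow_nonneg (norm_nonneg y) (-(d:ℝ)-(b+ε))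
    have : (0:ℝ) ≤ 2/ε := by positivity
    positivity
  set IG := ∫ y in ({0}ᶜ : Set (EuclideanSpace ℝ (Fin d))), G y with hIGdef
  have hIG : 0 ≤ IG := setIntegral_nonneg hms fun y _ => hG_nonneg y
  have key : ∀ α ∈ Set.Icc a b, ∀ α' ∈ Set.Icc a b,
      ∀ y : EuclideanSpace ℝ (Fin d), y ≠ 0 →
      |(1 - Real.cos (y ⟨0, hd⟩)) * ‖y‖ ^ (-(d : ℝ) - α) -
        (1 - Real.cos (y ⟨0, hd⟩)) * ‖y‖ ^ (-(d : ℝ) - α')| ≤ |α - α'| * G y := by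
    intro α hα α' hα' y hy
    have hr : 0 < ‖y‖ := norm_pos_iff.2 hy
    rw [← mul_sub, abs_mul, abs_of_nonneg (one_sub_cos_nonneg _)]
    calc (1 - Real.cos (y ⟨0, hd⟩)) * |‖y‖ ^ (-(d:ℝ) - α) - ‖y‖ ^ (-(d:ℝ) - α')|
        ≤ min 2 (‖y‖^2) * (|α - α'| * (2/ε) *
            ((‖y‖^(-(d:ℝ)-(a-ε)) + ‖y‖^(-(d:ℝ)-(a+ε))) +
             (‖y‖^(-(d:ℝ)-(b-ε)) + ‖y‖^(-(d:ℝ)-(b+ε))))) := by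
          refine mul_le_mul (one_sub_cos_le_min hd y)
            (rpow_diff hr hε hα.1 hα.2 hα'.1 hα'.2) (abs_nonneg _)
            (le_min (by norm_num) (sq_nonneg _))
      _ = |α - α'| * G y := by rw [hGdef]; ring
  have hlip : ∀ α ∈ Set.Icc a b, ∀ α' ∈ Set.Icc a b,
      |stableH d hd α - stableH d hd α'| ≤ (IG + 1) * |α - α'| := by
    intro α hα α' hα'
    have h1 : stableH d hd α - stableH d hd α' =
        ∫ y in ({0}ᶜ : Set (EuclideanSpace ℝ (Fin d))),
          ((1 - Real.cos (y ⟨0, hd⟩)) * ‖y‖ ^ (-(d : ℝ) - α) -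
           (1 - Real.cos (y ⟨0, hd⟩)) * ‖y‖ ^ (-(d : ℝ) - α')) := by
      rw [integral_sub (hint α hα) (hint α' hα')]
      rfl
    rw [h1]
    have h2 : ‖∫ y in ({0}ᶜ : Set (EuclideanSpace ℝ (Fin d))),
        ((1 - Real.cos (y ⟨0, hd⟩)) * ‖y‖ ^ (-(d : ℝ) - α) -
         (1 - Real.cos (y ⟨0, hd⟩)) * ‖y‖ ^ (-(d : ℝ) - α'))‖ ≤
        ∫ y in ({0}ᶜ : Set (EuclideanSpace ℝ (Fin d))), |α - α'| * G y := by
      refine norm_integral_le_of_norm_le (hGint.const_mul _) ?_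
      refine (ae_restrict_iff' hms).2 (ae_of_all _ fun y hy => ?_)
      rw [Real.norm_eq_abs]
      exact key α hα α' hα' y hy
    rw [integral_const_mul] at h2
    rw [← Real.norm_eq_abs]
    refine h2.trans ?_
    have := abs_nonneg (α - α')
    rw [← hIGdef]
    nlinarith
  refine ⟨hint, ⟨m, hm, hmle⟩, ⟨IG + 1, by linarith, hlip⟩, ?_⟩
  refine ⟨(IG + 1)/(m*m), div_pos (by linarith) (mul_pos hm hm), fun α hα α' hα' => ?_⟩
  have h1 := hmle α hα
  have h2 := hmle α' hα'
  have hα0 : 0 < stableH d hd α := lt_of_lt_of_le hm h1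
  have hα'0 : 0 < stableH d hd α' := lt_of_lt_of_le hm h2
  rw [inv_sub_inv hα0.ne' hα'0.ne', abs_div, abs_mul,
    abs_of_pos hα0, abs_of_pos hα'0]
  have hnum : |stableH d hd α' - stableH d hd α| ≤ (IG + 1) * |α - α'| := by
    rw [abs_sub_comm α α']
    exact hlip α' hα' α hα
  calc |stableH d hd α' - stableH d hd α| / (stableH d hd α * stableH d hd α')
      ≤ ((IG + 1) * |α - α'|) / (m * m) := by
        refine div_le_div₀ (mul_nonneg (by linarith) (abs_nonneg _)) hnum (mul_pos hm hm) ?_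
        exact mul_le_mul h1 h2 hm.le (le_of_lt hα0)
    _ = (IG + 1)/(m*m) * |α - α'| := by ring
end

section
/- Let (P_t)_{t≥0} be a strongly continuous contraction semigroup of positive operators on bounded measurable functions, and suppose a bounded measurable function u satisfies ‖P_t u‖_{C_b^κ} ≤ M e^{mt} t^{-β}‖u‖_∞ for all t > 0, with β ∈ [0,1), m ≥ 0, M > 0, κ > 0. Then for every λ > m, the λ-potential R_λ u := ∫_0^∞ e^{-λt} P_t u dt belongs to C_b^κ(ℝ^d) and ‖R_λ u‖_{C_b^κ} ≤ ‖u‖_∞ ((λ-m)^{-1} + (1-β)^{-1})(M+1). -/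
open MeasureTheory

/-- First difference operator `Δ_h f(x) = f(x+h) - f(x)`. -/
def diffOp {d : ℕ} (h : EuclideanSpace ℝ (Fin d)) (f : EuclideanSpace ℝ (Fin d) → ℝ) :
    EuclideanSpace ℝ (Fin d) → ℝ := fun x => f (x + h) - f x

open Set Real in
private lemma aux_exp_tendsto {c : ℝ} (hc : 0 < c) :
    Filter.Tendsto (fun t : ℝ => Real.exp (-c*t)) Filter.atTop (nhds 0) := by
  have h1 : Filter.Tendsto (fun t : ℝ => -c * t) Filter.atTop Filter.atBot :=
    Filter.Tendsto.const_mul_atTop_of_neg (by linarith) Filter.tendsto_id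
  exact Real.tendsto_exp_atBot.comp h1

open Set Real in
private lemma aux_exp_int {c : ℝ} (hc : 0 < c) :
    (∫ t in Ioi (0:ℝ), Real.exp (-c * t)) = c⁻¹ := by
  have := integral_Ioi_of_hasDerivAt_of_tendsto (f := fun t : ℝ => -Real.exp (-c*t) / c)
    (f' := fun t : ℝ => Real.exp (-c*t)) (a := 0) (m := 0)
    (Continuous.continuousWithinAt (by continuity)) ?_ (exp_neg_integrableOn_Ioi 0 hc) ?_
  · rw [this]; field_simp; simp
  · intro x _
    have h1 : HasDerivAt (fun t : ℝ => -c * t) (-c) x := by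
      simpa using (hasDerivAt_id x).const_mul (-c)
    have := ((h1.exp).neg.div_const c)
    convert this using 1
    · rfl
    · rfl
    · field_simp
  · simpa using (aux_exp_tendsto hc).neg.div_const c

open Set Real in
private lemma aux_gauge {c β : ℝ} (hc : 0 < c) (hβ0 : 0 ≤ β) (hβ1 : β < 1) :
    IntegrableOn (fun t => Real.exp (-c*t) * t ^ (-β)) (Set.Ioi 0) ∧
    (∫ t in Set.Ioi (0:ℝ), Real.exp (-c*t) * t ^ (-β)) ≤ c⁻¹ + (1-β)⁻¹ := by
  have hβ' : (0:ℝ) < 1 - β := by linarith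
  have hmeas : AEStronglyMeasurable (fun t : ℝ => Real.exp (-c*t) * t ^ (-β))
      (volume.restrict (Ioc 0 1)) := by
    apply Measurable.aestronglyMeasurable
    exact (Real.measurable_exp.comp (measurable_const.mul measurable_id)).mul
      (measurable_id.pow_const _)
  have hmeas2 : AEStronglyMeasurable (fun t : ℝ => Real.exp (-c*t) * t ^ (-β))
      (volume.restrict (Ioi 1)) := by
    apply Measurable.aestronglyMeasurable
    exact (Real.measurable_exp.comp (measurable_const.mul measurable_id)).mul
      (measurable_id.pow_const _)
  -- integrability on Ioc 0 1
  have hrpow_int : IntegrableOn (fun t : ℝ => t ^ (-β)) (Ioc 0 1) := by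
    have := intervalIntegral.intervalIntegrable_rpow' (a := 0) (b := 1) (r := -β)
      (by linarith)
    rwa [intervalIntegrable_iff_integrableOn_Ioc_of_le zero_le_one] at this
  have hb1 : ∀ t ∈ Ioc (0:ℝ) 1, ‖Real.exp (-c*t) * t ^ (-β)‖ ≤ t ^ (-β) := by
    intro t ht
    rw [norm_mul, Real.norm_eq_abs, Real.norm_eq_abs, abs_of_pos (Real.exp_pos _),
      abs_of_pos (Real.rpow_pos_of_pos ht.1 _)]
    nlinarith [Real.exp_le_one_iff.mpr (by nlinarith [ht.1.le] : -c*t ≤ 0),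
      (Real.rpow_pos_of_pos ht.1 (-β)).le]
  have h1 : IntegrableOn (fun t : ℝ => Real.exp (-c*t) * t ^ (-β)) (Ioc 0 1) := by
    apply Integrable.mono' hrpow_int hmeas
    exact (ae_restrict_iff' measurableSet_Ioc).mpr (Filter.Eventually.of_forall hb1)
  -- integrability on Ioi 1
  have hexp_int : IntegrableOn (fun t : ℝ => Real.exp (-c*t)) (Ioi 1) :=
    exp_neg_integrableOn_Ioi 1 hc
  have hb2 : ∀ t ∈ Ioi (1:ℝ), ‖Real.exp (-c*t) * t ^ (-β)‖ ≤ Real.exp (-c*t) := by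
    intro t ht
    have ht1 : (1:ℝ) ≤ t := le_of_lt ht
    have hle : t ^ (-β) ≤ 1 := Real.rpow_le_one_of_one_le_of_nonpos ht1 (by linarith)
    rw [norm_mul, Real.norm_eq_abs, Real.norm_eq_abs, abs_of_pos (Real.exp_pos _),
      abs_of_pos (Real.rpow_pos_of_pos (by linarith) _)]
    nlinarith [(Real.exp_pos (-c*t)).le]
  have h2 : IntegrableOn (fun t : ℝ => Real.exp (-c*t) * t ^ (-β)) (Ioi 1) := by
    apply Integrable.mono' hexp_int hmeas2
    exact (ae_restrict_iff' measurableSet_Ioi).mpr (Filter.Eventually.of_forall hb2)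
  have hsplit : Ioc (0:ℝ) 1 ∪ Ioi 1 = Ioi 0 := Ioc_union_Ioi_eq_Ioi zero_le_one
  have hint : IntegrableOn (fun t : ℝ => Real.exp (-c*t) * t ^ (-β)) (Ioi 0) := by
    rw [← hsplit]; exact h1.union h2
  refine ⟨hint, ?_⟩
  have hdisj : Disjoint (Ioc (0:ℝ) 1) (Ioi 1) := Ioc_disjoint_Ioi le_rfl
  rw [← hsplit, setIntegral_union hdisj measurableSet_Ioi h1 h2]
  have e1 : (∫ t in Ioc (0:ℝ) 1, Real.exp (-c*t) * t ^ (-β)) ≤ (1-β)⁻¹ := by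
    have hmono : (∫ t in Ioc (0:ℝ) 1, Real.exp (-c*t) * t ^ (-β))
        ≤ ∫ t in Ioc (0:ℝ) 1, t ^ (-β) := by
      apply setIntegral_mono_on h1 hrpow_int measurableSet_Ioc
      intro t ht
      have := hb1 t ht
      calc Real.exp (-c*t) * t ^ (-β) ≤ ‖Real.exp (-c*t) * t ^ (-β)‖ := le_abs_self _
        _ ≤ t ^ (-β) := this
    have hval : (∫ t in Ioc (0:ℝ) 1, t ^ (-β)) = (1-β)⁻¹ := by
      rw [← intervalIntegral.integral_of_le zero_le_one,
        integral_rpow (Or.inl (by linarith : (-1:ℝ) < -β))]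
      rw [Real.one_rpow, Real.zero_rpow (by linarith : -β + 1 ≠ 0)]
      rw [show -β + 1 = 1 - β by ring]
      simp [one_div]
    linarith
  have e2 : (∫ t in Ioi (1:ℝ), Real.exp (-c*t) * t ^ (-β)) ≤ c⁻¹ := by
    have hmono : (∫ t in Ioi (1:ℝ), Real.exp (-c*t) * t ^ (-β))
        ≤ ∫ t in Ioi (1:ℝ), Real.exp (-c*t) := by
      apply setIntegral_mono_on h2 hexp_int measurableSet_Ioi
      intro t ht
      calc Real.exp (-c*t) * t ^ (-β) ≤ ‖Real.exp (-c*t) * t ^ (-β)‖ := le_abs_self _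
        _ ≤ Real.exp (-c*t) := hb2 t ht
    have hmono2 : (∫ t in Ioi (1:ℝ), Real.exp (-c*t)) ≤ ∫ t in Ioi (0:ℝ), Real.exp (-c*t) := by
      apply setIntegral_mono_set (exp_neg_integrableOn_Ioi 0 hc)
        (Filter.Eventually.of_forall fun t => (Real.exp_pos _).le)
      exact Filter.Eventually.of_forall (Ioi_subset_Ioi zero_le_one)
    rw [aux_exp_int hc] at hmono2
    linarith
  linarith

open Set Real in
private lemma aux_core {β m lam C : ℝ} (hβ0 : 0 ≤ β) (hβ1 : β < 1) (hlam : m < lam)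
    (hC : 0 ≤ C) {v : ℝ → ℝ}
    (hv : AEStronglyMeasurable v (volume.restrict (Ioi 0)))
    (hbd : ∀ t ∈ Ioi (0:ℝ), |v t| ≤ C * (Real.exp (m*t) * t ^ (-β))) :
    IntegrableOn (fun t => Real.exp (-lam*t) * v t) (Ioi 0) ∧
    |∫ t in Ioi (0:ℝ), Real.exp (-lam*t) * v t| ≤ C * ((lam - m)⁻¹ + (1-β)⁻¹) := by
  have hc : 0 < lam - m := by linarith
  obtain ⟨hgint, hgval⟩ := aux_gauge hc hβ0 hβ1
  have hbound : ∀ t ∈ Ioi (0:ℝ),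
      ‖Real.exp (-lam*t) * v t‖ ≤ C * (Real.exp (-(lam-m)*t) * t ^ (-β)) := by
    intro t ht
    rw [norm_mul, Real.norm_eq_abs, Real.norm_eq_abs, abs_of_pos (Real.exp_pos _)]
    have h1 := hbd t ht
    have h2 : Real.exp (-lam*t) * (C * (Real.exp (m*t) * t ^ (-β)))
        = C * (Real.exp (-(lam-m)*t) * t ^ (-β)) := by
      rw [show -(lam-m)*t = -lam*t + m*t by ring, Real.exp_add]; ring
    calc Real.exp (-lam*t) * |v t| ≤ Real.exp (-lam*t) * (C * (Real.exp (m*t) * t ^ (-β))) :=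
          mul_le_mul_of_nonneg_left h1 (Real.exp_pos _).le
      _ = _ := h2
  have hCg : IntegrableOn (fun t : ℝ => C * (Real.exp (-(lam-m)*t) * t ^ (-β))) (Ioi 0) :=
    hgint.const_mul C
  have hmeas : AEStronglyMeasurable (fun t => Real.exp (-lam*t) * v t)
      (volume.restrict (Ioi 0)) :=
    ((Real.continuous_exp.comp (continuous_const.mul continuous_id)).aestronglyMeasurable).mul hv
  have hint : IntegrableOn (fun t => Real.exp (-lam*t) * v t) (Ioi 0) := by
    apply Integrable.mono' hCg hmeas
    exact (ae_restrict_iff' measurableSet_Ioi).mpr (Filter.Eventually.of_forall hbound)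
  refine ⟨hint, ?_⟩
  have := norm_integral_le_of_norm_le hCg
    ((ae_restrict_iff' measurableSet_Ioi).mpr (Filter.Eventually.of_forall hbound))
  rw [Real.norm_eq_abs] at this
  calc |∫ t in Ioi (0:ℝ), Real.exp (-lam*t) * v t|
      ≤ ∫ t in Ioi (0:ℝ), C * (Real.exp (-(lam-m)*t) * t ^ (-β)) := this
    _ = C * ∫ t in Ioi (0:ℝ), Real.exp (-(lam-m)*t) * t ^ (-β) := integral_const_mul _ _
    _ ≤ C * ((lam - m)⁻¹ + (1-β)⁻¹) := mul_le_mul_of_nonneg_left hgval hC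

open Set in
private lemma aux_swap {d : ℕ} (h : EuclideanSpace ℝ (Fin d)) (n : ℕ) :
    ∀ (G : ℝ → EuclideanSpace ℝ (Fin d) → ℝ),
    (∀ x, IntegrableOn (fun t => G t x) (Ioi 0)) →
    ∀ x, (diffOp h)^[n] (fun x' => ∫ t in Ioi (0:ℝ), G t x') x
      = ∫ t in Ioi (0:ℝ), (diffOp h)^[n] (G t) x := by
  induction n with
  | zero => intro G _ x; simp
  | succ n ih =>
    intro G hint x
    have hfun : (diffOp h (fun x' => ∫ t in Ioi (0:ℝ), G t x'))
        = fun x' => ∫ t in Ioi (0:ℝ), diffOp h (G t) x' := by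
      funext x'
      simp only [diffOp]
      rw [← integral_sub (hint _) (hint _)]
    rw [Function.iterate_succ_apply, hfun,
      ih (fun t => diffOp h (G t)) (fun x => ((hint (x+h)).sub (hint x)))]
    simp only [Function.iterate_succ_apply]

open Set in
private lemma aux_cont {d : ℕ} (h : EuclideanSpace ℝ (Fin d))
    (F : ℝ → EuclideanSpace ℝ (Fin d) → ℝ)
    (hF : ∀ x, ContinuousOn (fun t => F t x) (Ioi 0)) (n : ℕ) :
    ∀ x, ContinuousOn (fun t => (diffOp h)^[n] (F t) x) (Ioi 0) := by
  induction n with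
  | zero => exact hF
  | succ n ih =>
    intro x
    have : (fun t => (diffOp h)^[n+1] (F t) x)
        = fun t => (diffOp h)^[n] (F t) (x+h) - (diffOp h)^[n] (F t) x := by
      funext t
      rw [Function.iterate_succ_apply']
      rfl
    rw [this]
    exact (ih (x+h)).sub (ih x)

private lemma aux_pull {d : ℕ} (h : EuclideanSpace ℝ (Fin d)) (n : ℕ)
    (a : ℝ) (f : EuclideanSpace ℝ (Fin d) → ℝ) :
    (diffOp h)^[n] (fun x => a * f x) = fun x => a * (diffOp h)^[n] f x := by
  induction n generalizing f with
  | zero => rfl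
  | succ n ih =>
    rw [Function.iterate_succ_apply, Function.iterate_succ_apply]
    have : diffOp h (fun x => a * f x) = fun x => a * diffOp h f x := by
      funext x; simp only [diffOp]; ring
    rw [this, ih]

theorem stmt_12 (d : ℕ)
    (P : ℝ → (EuclideanSpace ℝ (Fin d) → ℝ) → (EuclideanSpace ℝ (Fin d) → ℝ))
    (u : EuclideanSpace ℝ (Fin d) → ℝ) (M m κ β lam : ℝ)
    (hM : 0 < M) (hm : 0 ≤ m) (hκ : 0 < κ) (hβ : β ∈ Set.Ico (0:ℝ) 1) (hlam : m < lam)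
    (hu_meas : Measurable u) (hu_bdd : ∃ c, ∀ x, |u x| ≤ c)
    (hsem : ∀ s > (0:ℝ), ∀ t > (0:ℝ), ∀ v : EuclideanSpace ℝ (Fin d) → ℝ,
      P (s + t) v = P t (P s v))
    (hpos : ∀ t > (0:ℝ), ∀ v : EuclideanSpace ℝ (Fin d) → ℝ,
      (∀ x, 0 ≤ v x) → ∀ x, 0 ≤ P t v x)
    (hcontr : ∀ t > (0:ℝ), ∀ v : EuclideanSpace ℝ (Fin d) → ℝ, ∀ c : ℝ,
      (∀ x, |v x| ≤ c) → ∀ x, |P t v x| ≤ c)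
    (hscont : ∀ x, ContinuousOn (fun t => P t u x) (Set.Ioi 0))
    (hPcont : ∀ t > (0:ℝ), Continuous (P t u))
    (hreg : ∀ t > (0:ℝ),
      (∀ x, |P t u x| ≤ M * Real.exp (m * t) * t ^ (-β) * ⨆ x', |u x'|) ∧
      (∀ (x h : EuclideanSpace ℝ (Fin d)), 0 < ‖h‖ → ‖h‖ ≤ 1 →
        |(diffOp h)^[Nat.floor κ + 1] (P t u) x| ≤
          M * Real.exp (m * t) * t ^ (-β) * (⨆ x', |u x'|) * ‖h‖ ^ κ)) :
    Continuous (fun x => ∫ t in Set.Ioi (0:ℝ), Real.exp (-lam * t) * P t u x) ∧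
    (∀ x, |∫ t in Set.Ioi (0:ℝ), Real.exp (-lam * t) * P t u x| ≤
      (⨆ x', |u x'|) * ((lam - m)⁻¹ + (1 - β)⁻¹) * (M + 1)) ∧
    (∀ (x h : EuclideanSpace ℝ (Fin d)), 0 < ‖h‖ → ‖h‖ ≤ 1 →
      |(diffOp h)^[Nat.floor κ + 1]
          (fun x' => ∫ t in Set.Ioi (0:ℝ), Real.exp (-lam * t) * P t u x') x| ≤
        (⨆ x', |u x'|) * ((lam - m)⁻¹ + (1 - β)⁻¹) * (M + 1) * ‖h‖ ^ κ) := by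
  obtain ⟨hβ0, hβ1⟩ := hβ
  set S := ⨆ x', |u x'| with hSdef
  obtain ⟨cb, hcb⟩ := hu_bdd
  have hbdd : BddAbove (Set.range fun x => |u x|) := ⟨cb, by rintro _ ⟨x, rfl⟩; exact hcb x⟩
  have hS0 : 0 ≤ S := le_trans (abs_nonneg _) (le_ciSup hbdd 0)
  have hc : 0 < lam - m := by linarith
  have hβ' : (0:ℝ) < 1 - β := by linarith
  have hA0 : (0:ℝ) ≤ (lam - m)⁻¹ + (1 - β)⁻¹ := by positivity
  set A := (lam - m)⁻¹ + (1 - β)⁻¹ with hAdef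
  -- basic measurability/bounds for v = P t u x
  have hv : ∀ x, AEStronglyMeasurable (fun t => P t u x) (volume.restrict (Set.Ioi 0)) :=
    fun x => (hscont x).aestronglyMeasurable measurableSet_Ioi
  have hbd : ∀ x, ∀ t ∈ Set.Ioi (0:ℝ), |P t u x| ≤ (M * S) * (Real.exp (m*t) * t ^ (-β)) := by
    intro x t ht
    calc |P t u x| ≤ M * Real.exp (m * t) * t ^ (-β) * S := (hreg t ht).1 x
      _ = (M * S) * (Real.exp (m*t) * t ^ (-β)) := by ring
  have hMS : (0:ℝ) ≤ M * S := mul_nonneg hM.le hS0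
  have hcore : ∀ x, IntegrableOn (fun t => Real.exp (-lam*t) * P t u x) (Set.Ioi 0) ∧
      |∫ t in Set.Ioi (0:ℝ), Real.exp (-lam*t) * P t u x| ≤ (M * S) * A :=
    fun x => aux_core hβ0 hβ1 hlam hMS (hv x) (hbd x)
  have hInt : ∀ x, IntegrableOn (fun t => Real.exp (-lam*t) * P t u x) (Set.Ioi 0) :=
    fun x => (hcore x).1
  refine ⟨?_, ?_, ?_⟩
  · -- continuity
    apply continuous_of_dominated
      (bound := fun t => (M*S) * (Real.exp (-(lam-m)*t) * t ^ (-β)))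
    · intro x
      exact ((Real.continuous_exp.comp
        (continuous_const.mul continuous_id)).aestronglyMeasurable).mul (hv x)
    · intro x
      refine (ae_restrict_iff' measurableSet_Ioi).mpr (Filter.Eventually.of_forall ?_)
      intro t ht
      rw [norm_mul, Real.norm_eq_abs, Real.norm_eq_abs, abs_of_pos (Real.exp_pos _)]
      have h1 := hbd x t ht
      have h2 : Real.exp (-lam*t) * ((M*S) * (Real.exp (m*t) * t ^ (-β)))
          = (M*S) * (Real.exp (-(lam-m)*t) * t ^ (-β)) := by
        rw [show -(lam-m)*t = -lam*t + m*t by ring, Real.exp_add]; ring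
      calc Real.exp (-lam*t) * |P t u x|
          ≤ Real.exp (-lam*t) * ((M*S) * (Real.exp (m*t) * t ^ (-β))) :=
            mul_le_mul_of_nonneg_left h1 (Real.exp_pos _).le
        _ = _ := h2
    · exact ((aux_gauge hc hβ0 hβ1).1).const_mul _
    · refine (ae_restrict_iff' measurableSet_Ioi).mpr (Filter.Eventually.of_forall ?_)
      intro t ht
      exact continuous_const.mul (hPcont t ht)
  · -- sup bound
    intro x
    have := (hcore x).2
    nlinarith [mul_nonneg hS0 hA0]
  · -- Hölder seminorm bound
    intro x h hh0 hh1
    set K := Nat.floor κ + 1 with hKdef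
    have hswap := aux_swap h K (fun t x' => Real.exp (-lam*t) * P t u x') hInt x
    have heq : ∀ t : ℝ, (diffOp h)^[K] ((fun t x' => Real.exp (-lam*t) * P t u x') t) x
        = Real.exp (-lam*t) * (diffOp h)^[K] (P t u) x := by
      intro t
      have := aux_pull h K (Real.exp (-lam*t)) (P t u)
      calc (diffOp h)^[K] ((fun t x' => Real.exp (-lam*t) * P t u x') t) x
          = (diffOp h)^[K] (fun x' => Real.exp (-lam*t) * P t u x') x := rfl
        _ = Real.exp (-lam*t) * (diffOp h)^[K] (P t u) x := by rw [this]
    have hswap2 : (diffOp h)^[K]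
        (fun x' => ∫ t in Set.Ioi (0:ℝ), Real.exp (-lam * t) * P t u x') x
        = ∫ t in Set.Ioi (0:ℝ), Real.exp (-lam*t) * (diffOp h)^[K] (P t u) x := by
      rw [hswap]
      exact setIntegral_congr_fun measurableSet_Ioi (fun t _ => heq t)
    rw [hswap2]
    have hhκ0 : (0:ℝ) ≤ ‖h‖ ^ κ := Real.rpow_nonneg (norm_nonneg h) κ
    have hC : (0:ℝ) ≤ M * S * ‖h‖ ^ κ := by positivity
    have hvmeas : AEStronglyMeasurable (fun t => (diffOp h)^[K] (P t u) x)
        (volume.restrict (Set.Ioi 0)) :=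
      (aux_cont h (fun t => P t u) hscont K x).aestronglyMeasurable measurableSet_Ioi
    have hbd2 : ∀ t ∈ Set.Ioi (0:ℝ),
        |(diffOp h)^[K] (P t u) x| ≤ (M * S * ‖h‖ ^ κ) * (Real.exp (m*t) * t ^ (-β)) := by
      intro t ht
      calc |(diffOp h)^[K] (P t u) x|
          ≤ M * Real.exp (m * t) * t ^ (-β) * S * ‖h‖ ^ κ := (hreg t ht).2 x h hh0 hh1
        _ = (M * S * ‖h‖ ^ κ) * (Real.exp (m*t) * t ^ (-β)) := by ring
    have h3 := (aux_core hβ0 hβ1 hlam hC hvmeas hbd2).2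
    rw [← hAdef] at h3
    have key : M * S * ‖h‖ ^ κ * A ≤ S * A * (M + 1) * ‖h‖ ^ κ := by
      nlinarith [mul_nonneg (mul_nonneg hS0 hA0) hhκ0]
    calc |∫ t in Set.Ioi (0:ℝ), Real.exp (-lam*t) * (diffOp h)^[K] (P t u) x|
        ≤ M * S * ‖h‖ ^ κ * A := h3
      _ ≤ S * A * (M + 1) * ‖h‖ ^ κ := key
end
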